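/- For any seminormal quasi-crystal Q of type Φ, the free ⊗-quasi-crystal monoid F^⊗(Q) is a ⊗-quasi-crystal monoid of type Φ; moreover its weight map satisfies wt(x₁x₂⋯x_m) = wt(x₁) + wt(x₂) + ⋯ + wt(x_m) for all letters x₁, …, x_m ∈ Q. -/

import Mathlib

/-! ## Root system setting -/

/-- The data of a root system `Φ` in a Euclidean space `V`, together with a choice of
simple roots `(α_i)_{i ∈ ι}` and a weight lattice `Λ`, with the integer-valued coroot
pairing `pair λ i = ⟨λ, α_i^∨⟩ = 2⟪λ, α_i⟫/⟪α_i, α_i⟫` on the weight lattice. -/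
structure QCSetting (V : Type*) [NormedAddCommGroup V] [InnerProductSpace ℝ V]
    (ι : Type*) where
  Φ : Set V
  finite : Φ.Finite
  nonempty : Φ.Nonempty
  zero_not_mem : (0 : V) ∉ Φ
  reflect_mem : ∀ a ∈ Φ, ∀ b ∈ Φ, b - (2 * (inner ℝ b a : ℝ) / (inner ℝ a a : ℝ)) • a ∈ Φ
  smul_root : ∀ a ∈ Φ, ∀ k : ℝ, k • a ∈ Φ → k = 1 ∨ k = -1
  simple : ι → V
  simple_mem : ∀ i, simple i ∈ Φ
  simple_indep : LinearIndependent ℝ simple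
  Λ : AddSubgroup V
  lattice_spans : Submodule.span ℝ (Λ : Set V) = ⊤
  root_mem_lattice : ∀ a ∈ Φ, a ∈ Λ
  pair : Λ → ι → ℤ
  pair_spec : ∀ (v : Λ) (i : ι),
    (pair v i : ℝ) = 2 * (inner ℝ (v : V) (simple i) : ℝ) / (inner ℝ (simple i) (simple i) : ℝ)

variable {V : Type*} [NormedAddCommGroup V] [InnerProductSpace ℝ V] {ι : Type*}

/-! ## Quasi-crystals -/

/-- The structure maps of a quasi-crystal of type `S` on an underlying set `Q`:
a weight map `wt` with values in the weight lattice, partial quasi-Kashiwara operators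
`e i, f i : Q → Q ⊔ {⊥}` (realized as `Option`-valued maps, `none` playing the role
of `⊥`), and maps `ε i, φ i : Q → ℤ ∪ {+∞}` (realized as `WithTop ℤ`). -/
structure QC (S : QCSetting V ι) (Q : Type*) where
  wt : Q → S.Λ
  e : ι → Q → Option Q
  f : ι → Q → Option Q
  ε : ι → Q → WithTop ℤ
  φ : ι → Q → WithTop ℤ

/-- `k`-fold iteration of a partial map `g : Q → Option Q` starting at `x`. -/
def optIter {Q : Type*} (g : Q → Option Q) (k : ℕ) (x : Q) : Option Q :=
  (fun o => o.bind g)^[k] (some x)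

/-- The axioms of a seminormal quasi-crystal. -/
structure QC.IsSeminormal {S : QCSetting V ι} {Q : Type*} (𝒬 : QC S Q) : Prop where
  phi_eq : ∀ i x, 𝒬.φ i x = 𝒬.ε i x + ((S.pair (𝒬.wt x) i : ℤ) : WithTop ℤ)
  wt_e : ∀ i x y, 𝒬.e i x = some y → (𝒬.wt y : V) = (𝒬.wt x : V) + S.simple i
  wt_f : ∀ i x y, 𝒬.f i x = some y → (𝒬.wt y : V) = (𝒬.wt x : V) - S.simple i
  e_iff_f : ∀ i x y, 𝒬.e i x = some y ↔ 𝒬.f i y = some x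
  e_of_top : ∀ i x, 𝒬.ε i x = ⊤ → 𝒬.e i x = none
  f_of_top : ∀ i x, 𝒬.ε i x = ⊤ → 𝒬.f i x = none
  eps_spec : ∀ i x, 𝒬.ε i x ≠ ⊤ → ∃ n : ℕ, 𝒬.ε i x = ((n : ℤ) : WithTop ℤ) ∧
    IsGreatest {k : ℕ | (optIter (𝒬.e i) k x).isSome} n
  phi_spec : ∀ i x, 𝒬.ε i x ≠ ⊤ → ∃ n : ℕ, 𝒬.φ i x = ((n : ℤ) : WithTop ℤ) ∧
    IsGreatest {k : ℕ | (optIter (𝒬.f i) k x).isSome} n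

/-- A seminormal crystal is a seminormal quasi-crystal in which `ε i x ≠ +∞` always. -/
def QC.IsSeminormalCrystal {S : QCSetting V ι} {Q : Type*} (𝒬 : QC S Q) : Prop :=
  𝒬.IsSeminormal ∧ ∀ i x, 𝒬.ε i x ≠ ⊤

noncomputable section

/-! ## Tensor product -/

/-- The tensor product of two quasi-crystals of the same type. -/
def QC.tensor {S : QCSetting V ι} {Q Q' : Type*} (𝒬 : QC S Q) (𝒬' : QC S Q') :
    QC S (Q × Q') where
  wt p := 𝒬.wt p.1 + 𝒬'.wt p.2
  ε i p := max (𝒬.ε i p.1) (𝒬'.ε i p.2 + ((-(S.pair (𝒬.wt p.1) i) : ℤ) : WithTop ℤ))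
  φ i p := max (𝒬.φ i p.1 + ((S.pair (𝒬'.wt p.2) i : ℤ) : WithTop ℤ)) (𝒬'.φ i p.2)
  e i p := if 𝒬'.ε i p.2 ≤ 𝒬.φ i p.1
    then (𝒬.e i p.1).map (fun y => (y, p.2))
    else (𝒬'.e i p.2).map (fun y => (p.1, y))
  f i p := if 𝒬'.ε i p.2 < 𝒬.φ i p.1
    then (𝒬.f i p.1).map (fun y => (y, p.2))
    else (𝒬'.f i p.2).map (fun y => (p.1, y))

/-! ## Quasi-tensor product -/

/-- The (inverse-free) quasi-tensor product of two quasi-crystals of the same type. -/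
def QC.qtensor {S : QCSetting V ι} {Q Q' : Type*} (𝒬 : QC S Q) (𝒬' : QC S Q') :
    QC S (Q × Q') where
  wt p := 𝒬.wt p.1 + 𝒬'.wt p.2
  ε i p := if 0 < 𝒬.φ i p.1 ∧ 0 < 𝒬'.ε i p.2 then ⊤
    else max (𝒬.ε i p.1) (𝒬'.ε i p.2 + ((-(S.pair (𝒬.wt p.1) i) : ℤ) : WithTop ℤ))
  φ i p := if 0 < 𝒬.φ i p.1 ∧ 0 < 𝒬'.ε i p.2 then ⊤
    else max (𝒬.φ i p.1 + ((S.pair (𝒬'.wt p.2) i : ℤ) : WithTop ℤ)) (𝒬'.φ i p.2)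
  e i p := if 0 < 𝒬.φ i p.1 ∧ 0 < 𝒬'.ε i p.2 then none
    else if 𝒬'.ε i p.2 ≤ 𝒬.φ i p.1 then (𝒬.e i p.1).map (fun y => (y, p.2))
    else (𝒬'.e i p.2).map (fun y => (p.1, y))
  f i p := if 0 < 𝒬.φ i p.1 ∧ 0 < 𝒬'.ε i p.2 then none
    else if 𝒬'.ε i p.2 < 𝒬.φ i p.1 then (𝒬.f i p.1).map (fun y => (y, p.2))
    else (𝒬'.f i p.2).map (fun y => (p.1, y))

/-! ## Homomorphisms -/

/-- A quasi-crystal homomorphism `ψ : 𝒬 → 𝒬'`, i.e. a map `Q ⊔ {⊥} → Q' ⊔ {⊥}`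
(realized on `Option`s, `none` playing the role of `⊥`) compatible with the structure
maps in the appropriate sense. -/
structure QCHom {S : QCSetting V ι} {Q Q' : Type*} (𝒬 : QC S Q) (𝒬' : QC S Q') where
  toFun : Option Q → Option Q'
  map_none : toFun none = none
  wt_eq : ∀ x y, toFun (some x) = some y → 𝒬'.wt y = 𝒬.wt x
  eps_eq : ∀ i x y, toFun (some x) = some y → 𝒬'.ε i y = 𝒬.ε i x
  phi_eq : ∀ i x y, toFun (some x) = some y → 𝒬'.φ i y = 𝒬.φ i x
  comm_e : ∀ i x x' y y', 𝒬.e i x = some x' → toFun (some x) = some y →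
    toFun (some x') = some y' → 𝒬'.e i y = some y'
  comm_f : ∀ i x x' y y', 𝒬.f i x = some x' → toFun (some x) = some y →
    toFun (some x') = some y' → 𝒬'.f i y = some y'

/-! ## The free `⊗`-quasi-crystal monoid -/

/-- Weight of a word: the sum of the weights of its letters. -/
def freeWt {S : QCSetting V ι} {Q : Type*} (𝒬 : QC S Q) : List Q → S.Λ
  | [] => 0
  | x :: w => 𝒬.wt x + freeWt 𝒬 w

/-- The map `ε̈_i` of the free `⊗`-quasi-crystal monoid. -/
def freeEps {S : QCSetting V ι} {Q : Type*} (𝒬 : QC S Q) (i : ι) : List Q → WithTop ℤ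
  | [] => 0
  | x :: w => max (𝒬.ε i x) (freeEps 𝒬 i w + ((-(S.pair (𝒬.wt x) i) : ℤ) : WithTop ℤ))

/-- The map `φ̈_i` of the free `⊗`-quasi-crystal monoid. -/
def freePhi {S : QCSetting V ι} {Q : Type*} (𝒬 : QC S Q) (i : ι) : List Q → WithTop ℤ
  | [] => 0
  | x :: w => max (𝒬.φ i x + ((S.pair (freeWt 𝒬 w) i : ℤ) : WithTop ℤ)) (freePhi 𝒬 i w)

/-- The operator `ë_i` of the free `⊗`-quasi-crystal monoid. -/
def freeE {S : QCSetting V ι} {Q : Type*} (𝒬 : QC S Q) (i : ι) : List Q → Option (List Q)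
  | [] => none
  | x :: w => if freeEps 𝒬 i w ≤ 𝒬.φ i x
      then (𝒬.e i x).map (· :: w)
      else (freeE 𝒬 i w).map (x :: ·)

/-- The operator `f̈_i` of the free `⊗`-quasi-crystal monoid. -/
def freeF {S : QCSetting V ι} {Q : Type*} (𝒬 : QC S Q) (i : ι) : List Q → Option (List Q)
  | [] => none
  | x :: w => if freeEps 𝒬 i w < 𝒬.φ i x
      then (𝒬.f i x).map (· :: w)
      else (freeF 𝒬 i w).map (x :: ·)

/-- The quasi-crystal structure of the free `⊗`-quasi-crystal monoid `F^⊗(𝒬)`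
on the free monoid `Q*`. -/
def freeTensorQC {S : QCSetting V ι} {Q : Type*} (𝒬 : QC S Q) : QC S (FreeMonoid Q) where
  wt w := freeWt 𝒬 (FreeMonoid.toList w)
  ε i w := freeEps 𝒬 i (FreeMonoid.toList w)
  φ i w := freePhi 𝒬 i (FreeMonoid.toList w)
  e i w := (freeE 𝒬 i (FreeMonoid.toList w)).map (fun l => FreeMonoid.ofList l)
  f i w := (freeF 𝒬 i (FreeMonoid.toList w)).map (fun l => FreeMonoid.ofList l)

/-! ## The free `⊗̈`-quasi-crystal monoid -/

/-- The map `ε̈_i` of the free `⊗̈`-quasi-crystal monoid. -/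
def qfreeEps {S : QCSetting V ι} {Q : Type*} (𝒬 : QC S Q) (i : ι) : List Q → WithTop ℤ
  | [] => 0
  | x :: w => if 0 < 𝒬.φ i x ∧ 0 < qfreeEps 𝒬 i w then ⊤
      else max (𝒬.ε i x) (qfreeEps 𝒬 i w + ((-(S.pair (𝒬.wt x) i) : ℤ) : WithTop ℤ))

/-- The map `φ̈_i` of the free `⊗̈`-quasi-crystal monoid. -/
def qfreePhi {S : QCSetting V ι} {Q : Type*} (𝒬 : QC S Q) (i : ι) : List Q → WithTop ℤ
  | [] => 0
  | x :: w => if 0 < 𝒬.φ i x ∧ 0 < qfreeEps 𝒬 i w then ⊤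
      else max (𝒬.φ i x + ((S.pair (freeWt 𝒬 w) i : ℤ) : WithTop ℤ)) (qfreePhi 𝒬 i w)

/-- The operator `ë_i` of the free `⊗̈`-quasi-crystal monoid. -/
def qfreeE {S : QCSetting V ι} {Q : Type*} (𝒬 : QC S Q) (i : ι) : List Q → Option (List Q)
  | [] => none
  | x :: w => if 0 < 𝒬.φ i x ∧ 0 < qfreeEps 𝒬 i w then none
      else if qfreeEps 𝒬 i w ≤ 𝒬.φ i x then (𝒬.e i x).map (· :: w)
      else (qfreeE 𝒬 i w).map (x :: ·)

/-- The operator `f̈_i` of the free `⊗̈`-quasi-crystal monoid. -/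
def qfreeF {S : QCSetting V ι} {Q : Type*} (𝒬 : QC S Q) (i : ι) : List Q → Option (List Q)
  | [] => none
  | x :: w => if 0 < 𝒬.φ i x ∧ 0 < qfreeEps 𝒬 i w then none
      else if qfreeEps 𝒬 i w < 𝒬.φ i x then (𝒬.f i x).map (· :: w)
      else (qfreeF 𝒬 i w).map (x :: ·)

/-- The quasi-crystal structure of the free `⊗̈`-quasi-crystal monoid `F^⊗̈(𝒬)`
on the free monoid `Q*`. -/
def freeQTensorQC {S : QCSetting V ι} {Q : Type*} (𝒬 : QC S Q) : QC S (FreeMonoid Q) where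
  wt w := freeWt 𝒬 (FreeMonoid.toList w)
  ε i w := qfreeEps 𝒬 i (FreeMonoid.toList w)
  φ i w := qfreePhi 𝒬 i (FreeMonoid.toList w)
  e i w := (qfreeE 𝒬 i (FreeMonoid.toList w)).map (fun l => FreeMonoid.ofList l)
  f i w := (qfreeF 𝒬 i (FreeMonoid.toList w)).map (fun l => FreeMonoid.ofList l)

/-! ## Connected components, plactic and hypoplactic congruences -/

/-- Two elements are connected in the quasi-crystal graph if they are related by the
reflexive-symmetric-transitive closure of the edge relation given by the
quasi-Kashiwara operators. -/
def QC.conn {S : QCSetting V ι} {Q : Type*} (𝒬 : QC S Q) : Q → Q → Prop :=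
  Relation.EqvGen (fun x y => ∃ i, 𝒬.f i x = some y ∨ 𝒬.f i y = some x ∨
    𝒬.e i x = some y ∨ 𝒬.e i y = some x)

/-- The connected component `𝒬(x)` of a quasi-crystal `𝒬` containing `x`, as a
quasi-crystal on the subtype of elements connected with `x`. -/
def QC.compQC {S : QCSetting V ι} {Q : Type*} (𝒬 : QC S Q) (x : Q) :
    QC S {y : Q // 𝒬.conn x y} where
  wt y := 𝒬.wt y.1
  ε i y := 𝒬.ε i y.1
  φ i y := 𝒬.φ i y.1
  e i y := (𝒬.e i y.1).pmap (fun z hz => (⟨z, hz⟩ : {y : Q // 𝒬.conn x y}))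
    (fun z hz => Relation.EqvGen.trans _ _ _ y.2
      (Relation.EqvGen.rel _ _ ⟨i, Or.inr (Or.inr (Or.inl hz))⟩))
  f i y := (𝒬.f i y.1).pmap (fun z hz => (⟨z, hz⟩ : {y : Q // 𝒬.conn x y}))
    (fun z hz => Relation.EqvGen.trans _ _ _ y.2
      (Relation.EqvGen.rel _ _ ⟨i, Or.inl hz⟩))

/-- The plactic congruence: `u ≈ v` iff there is a quasi-crystal isomorphism between the
connected components of `u` and `v` in `F^⊗(𝒬)` mapping `u` to `v`. -/
def placticRel {S : QCSetting V ι} {Q : Type*} (𝒬 : QC S Q)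
    (u v : FreeMonoid Q) : Prop :=
  ∃ ψ : QCHom ((freeTensorQC 𝒬).compQC u) ((freeTensorQC 𝒬).compQC v),
    Function.Bijective ψ.toFun ∧
    ψ.toFun (some ⟨u, Relation.EqvGen.refl u⟩) = some ⟨v, Relation.EqvGen.refl v⟩

/-- The hypoplactic congruence: `u ∼̈ v` iff there is a quasi-crystal isomorphism between
the connected components of `u` and `v` in `F^⊗̈(𝒬)` mapping `u` to `v`. -/
def hypoRel {S : QCSetting V ι} {Q : Type*} (𝒬 : QC S Q)
    (u v : FreeMonoid Q) : Prop :=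
  ∃ ψ : QCHom ((freeQTensorQC 𝒬).compQC u) ((freeQTensorQC 𝒬).compQC v),
    Function.Bijective ψ.toFun ∧
    ψ.toFun (some ⟨u, Relation.EqvGen.refl u⟩) = some ⟨v, Relation.EqvGen.refl v⟩

/-! ## Quasi-crystal monoids -/

/-- A monoid is equidivisible if whenever `x₁y₁ = x₂y₂` one of the factorizations
refines the other. -/
def Equidivisible (M : Type*) [Monoid M] : Prop :=
  ∀ x₁ x₂ y₁ y₂ : M, x₁ * y₁ = x₂ * y₂ →
    ∃ z : M, (x₂ = x₁ * z ∧ y₁ = z * y₂) ∨ (x₁ = x₂ * z ∧ y₂ = z * y₁)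

/-- A `⊗`-quasi-crystal monoid: a seminormal quasi-crystal structure on a monoid whose
structure maps interact with the multiplication by the tensor-product rules. -/
structure IsTensorQCMon {S : QCSetting V ι} {M : Type*} [Monoid M] (𝒬 : QC S M) : Prop where
  seminormal : 𝒬.IsSeminormal
  wt_mul : ∀ x y, 𝒬.wt (x * y) = 𝒬.wt x + 𝒬.wt y
  eps_mul : ∀ i x y, 𝒬.ε i (x * y) =
    max (𝒬.ε i x) (𝒬.ε i y + ((-(S.pair (𝒬.wt x) i) : ℤ) : WithTop ℤ))
  phi_mul : ∀ i x y, 𝒬.φ i (x * y) =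
    max (𝒬.φ i x + ((S.pair (𝒬.wt y) i : ℤ) : WithTop ℤ)) (𝒬.φ i y)
  e_mul : ∀ i x y, 𝒬.e i (x * y) =
    if 𝒬.ε i y ≤ 𝒬.φ i x then (𝒬.e i x).map (· * y) else (𝒬.e i y).map (x * ·)
  f_mul : ∀ i x y, 𝒬.f i (x * y) =
    if 𝒬.ε i y < 𝒬.φ i x then (𝒬.f i x).map (· * y) else (𝒬.f i y).map (x * ·)

/-- A `⊗̈`-quasi-crystal monoid: a seminormal quasi-crystal structure on a monoid such
that `x ⊗̈ y ↦ x·y` induces a quasi-crystal homomorphism `M ⊗̈ M → M`. -/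
def IsQTensorQCMon {S : QCSetting V ι} {M : Type*} [Monoid M] (𝒬 : QC S M) : Prop :=
  𝒬.IsSeminormal ∧
  ∃ ψ : QCHom (𝒬.qtensor 𝒬) 𝒬, ψ.toFun = Option.map (fun p => p.1 * p.2)

/-! ## The bicyclic monoid with zero `B₀` and the monoid `Z₀` -/

/-- The bicyclic monoid `⟨−, + | (+)(−) = ε⟩`: elements are normal forms `(−)^a(+)^b`. -/
structure Bic where
  neg : ℕ
  pos : ℕ
deriving DecidableEq

instance : Mul Bic :=
  ⟨fun x y => ⟨x.neg + (y.neg - x.pos), y.pos + (x.pos - y.neg)⟩⟩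

theorem Bic.mul_def (x y : Bic) :
    x * y = ⟨x.neg + (y.neg - x.pos), y.pos + (x.pos - y.neg)⟩ := rfl

instance : One Bic := ⟨⟨0, 0⟩⟩

theorem Bic.one_def : (1 : Bic) = ⟨0, 0⟩ := rfl

instance : Monoid Bic where
  mul_assoc x y z := by
    simp only [Bic.mul_def, Bic.mk.injEq]
    omega
  one_mul x := by
    simp only [Bic.one_def, Bic.mul_def]
    cases x
    simp only [Bic.mk.injEq]
    omega
  mul_one x := by
    simp only [Bic.one_def, Bic.mul_def]
    cases x
    simp only [Bic.mk.injEq]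
    omega

/-- The bicyclic monoid with a zero element adjoined,
`B₀ = ⟨0, −, + | (+)(−) = ε, 0x = x0 = 0⟩`. -/
abbrev B0 : Type := WithZero Bic

/-- The monoid `Z₀ = ⟨0, −, + | (+)(−) = 0, 0x = x0 = 0⟩`: the nonzero elements are the
normal forms `(−)^a(+)^b`. -/
inductive Z0 : Type
  | zero : Z0
  | word : ℕ → ℕ → Z0
deriving DecidableEq

instance : Mul Z0 :=
  ⟨fun x y => match x, y with
    | Z0.zero, _ => Z0.zero
    | _, Z0.zero => Z0.zero
    | Z0.word a b, Z0.word c d =>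
        if 0 < b ∧ 0 < c then Z0.zero else Z0.word (a + c) (b + d)⟩

instance : One Z0 := ⟨Z0.word 0 0⟩

instance : Zero Z0 := ⟨Z0.zero⟩

theorem Z0.one_def : (1 : Z0) = Z0.word 0 0 := rfl
theorem Z0.zero_def : (0 : Z0) = Z0.zero := rfl
theorem Z0.zero_mul' (x : Z0) : Z0.zero * x = Z0.zero := by cases x <;> rfl
theorem Z0.mul_zero' (x : Z0) : x * Z0.zero = Z0.zero := by cases x <;> rfl
theorem Z0.word_mul_word (a b c d : ℕ) :
    Z0.word a b * Z0.word c d =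
      if 0 < b ∧ 0 < c then Z0.zero else Z0.word (a + c) (b + d) := rfl

instance : MonoidWithZero Z0 where
  mul_assoc x y z := by
    cases x <;> cases y <;> cases z <;>
      simp only [Z0.zero_mul', Z0.mul_zero', Z0.word_mul_word]
    · split_ifs <;> simp_all [Z0.zero_mul', Z0.mul_zero', Z0.word_mul_word] <;>
        split_ifs <;> simp_all <;> omega
  one_mul x := by
    cases x
    · rfl
    · simp [Z0.one_def, Z0.word_mul_word]
  mul_one x := by
    cases x
    · rfl
    · simp [Z0.one_def, Z0.word_mul_word]
  zero_mul x := by cases x <;> rfl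
  mul_zero x := by cases x <;> rfl

/-! ## Signature maps -/

/-- The `i`-signature map for the tensor product `⊗`:
`sgn_i^⊗(w) = 0` if `ε̈_i(w) = +∞`, and `(−)^{ε̈_i(w)}(+)^{φ̈_i(w)}` otherwise. -/
def tsgn {V : Type*} [NormedAddCommGroup V] [InnerProductSpace ℝ V] {ι : Type*}
    {S : QCSetting V ι} {Q : Type*} (𝒬 : QC S Q) (i : ι) (w : FreeMonoid Q) : B0 :=
  if freeEps 𝒬 i (FreeMonoid.toList w) = ⊤ then 0
  else ↑(Bic.mk (WithTop.untopD 0 (freeEps 𝒬 i (FreeMonoid.toList w))).toNat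
      (WithTop.untopD 0 (freePhi 𝒬 i (FreeMonoid.toList w))).toNat)

/-- The `i`-signature map for the quasi-tensor product `⊗̈`:
`sgn_i^⊗̈(w) = 0` if `ε̈_i(w) = +∞`, and `(−)^{ε̈_i(w)}(+)^{φ̈_i(w)}` otherwise. -/
def qsgn {V : Type*} [NormedAddCommGroup V] [InnerProductSpace ℝ V] {ι : Type*}
    {S : QCSetting V ι} {Q : Type*} (𝒬 : QC S Q) (i : ι) (w : FreeMonoid Q) : Z0 :=
  if qfreeEps 𝒬 i (FreeMonoid.toList w) = ⊤ then 0
  else Z0.word (WithTop.untopD 0 (qfreeEps 𝒬 i (FreeMonoid.toList w))).toNat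
      (WithTop.untopD 0 (qfreePhi 𝒬 i (FreeMonoid.toList w))).toNat

end

/-! ## Auxiliary lemmas -/

section Aux

variable {S : QCSetting V ι} {Q : Type*}

/-- coercion of elements of the lattice -/
theorem QCSetting.pair_add' (S : QCSetting V ι) (v w : S.Λ) (i : ι) :
    S.pair (v + w) i = S.pair v i + S.pair w i := by
  have h1 := S.pair_spec (v + w) i
  have h2 := S.pair_spec v i
  have h3 := S.pair_spec w i
  have : ((S.pair (v + w) i : ℤ) : ℝ) = ((S.pair v i + S.pair w i : ℤ) : ℝ) := by
    push_cast
    rw [h1, h2, h3]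
    have : ((v + w : S.Λ) : V) = (v : V) + (w : V) := rfl
    rw [this, inner_add_left]
    ring
  exact_mod_cast this

theorem QCSetting.pair_zero' (S : QCSetting V ι) (i : ι) : S.pair 0 i = 0 := by
  have h1 := S.pair_spec 0 i
  have : ((S.pair 0 i : ℤ) : ℝ) = ((0 : ℤ) : ℝ) := by
    rw [h1]
    have : ((0 : S.Λ) : V) = (0 : V) := rfl
    rw [this, inner_zero_left]
    ring
  exact_mod_cast this

theorem QCSetting.simple_ne_zero (S : QCSetting V ι) (i : ι) : S.simple i ≠ 0 := by
  intro h0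
  exact S.zero_not_mem (h0 ▸ S.simple_mem i)

theorem QCSetting.inner_simple_ne_zero (S : QCSetting V ι) (i : ι) :
    (inner ℝ (S.simple i) (S.simple i) : ℝ) ≠ 0 := by
  simpa [inner_self_eq_zero] using S.simple_ne_zero i

theorem QCSetting.pair_add_simple (S : QCSetting V ι) (v w : S.Λ) (i : ι)
    (h : (w : V) = (v : V) + S.simple i) : S.pair w i = S.pair v i + 2 := by
  have h1 := S.pair_spec w i
  have h2 := S.pair_spec v i
  have hne := S.inner_simple_ne_zero i
  have : ((S.pair w i : ℤ) : ℝ) = ((S.pair v i + 2 : ℤ) : ℝ) := by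
    push_cast
    rw [h1, h2, h, inner_add_left]
    field_simp
  exact_mod_cast this

theorem QCSetting.pair_sub_simple (S : QCSetting V ι) (v w : S.Λ) (i : ι)
    (h : (w : V) = (v : V) - S.simple i) : S.pair w i = S.pair v i - 2 := by
  have h1 := S.pair_spec w i
  have h2 := S.pair_spec v i
  have hne := S.inner_simple_ne_zero i
  have : ((S.pair w i : ℤ) : ℝ) = ((S.pair v i - 2 : ℤ) : ℝ) := by
    push_cast
    rw [h1, h2, h, inner_sub_left]
    field_simp
  exact_mod_cast this

/-! ### optIter lemmas -/

theorem optIter_zero {A : Type*} (g : A → Option A) (x : A) :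
    optIter g 0 x = some x := rfl

theorem optIter_one {A : Type*} (g : A → Option A) (x : A) :
    optIter g 1 x = g x := rfl

theorem optIter_succ {A : Type*} (g : A → Option A) (k : ℕ) (x : A) :
    optIter g (k + 1) x = (optIter g k x).bind g := by
  simp [optIter, Function.iterate_succ_apply']

theorem optIter_succ_apply {A : Type*} (g : A → Option A) (k : ℕ) (x y : A)
    (hxy : g x = some y) : optIter g (k + 1) x = optIter g k y := by
  simp [optIter, Function.iterate_succ_apply, hxy]

theorem bind_iterate_none {A : Type*} (g : A → Option A) (j : ℕ) :
    (fun o : Option A => o.bind g)^[j] none = none := by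
  induction j with
  | zero => rfl
  | succ n ih => rw [Function.iterate_succ_apply, Option.bind_none]; exact ih

theorem optIter_none_of_none {A : Type*} (g : A → Option A) (k j : ℕ) (x : A)
    (hk : optIter g k x = none) : optIter g (k + j) x = none := by
  have h2 : optIter g (k + j) x = (fun o => o.bind g)^[j] (optIter g k x) := by
    rw [optIter, add_comm, Function.iterate_add_apply]; rfl
  rw [h2, hk, bind_iterate_none]

theorem optIter_isSome_of_le {A : Type*} (g : A → Option A) {k j : ℕ} {x : A}
    (hjk : j ≤ k) (hk : (optIter g k x).isSome) : (optIter g j x).isSome := by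
  by_contra hcon
  rw [Option.not_isSome_iff_eq_none] at hcon
  have := optIter_none_of_none g j (k - j) x hcon
  rw [Nat.add_sub_cancel' hjk] at this
  rw [this] at hk
  simp at hk

/-! ### WithTop ℤ helpers -/

theorem wt_add_coe_ne_top {a : WithTop ℤ} (c : ℤ) (h : a ≠ ⊤) :
    a + (c : WithTop ℤ) ≠ ⊤ := by
  simp [WithTop.add_eq_top, h]

theorem wt_add_coe_eq_top {a : WithTop ℤ} (c : ℤ) :
    a + (c : WithTop ℤ) = ⊤ ↔ a = ⊤ := by
  simp [WithTop.add_eq_top]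

/-! ### Letter-level lemmas -/

variable {𝒬 : QC S Q}

theorem QC.IsSeminormal.eps_top_iff_phi (h : 𝒬.IsSeminormal) (i : ι) (x : Q) :
    𝒬.ε i x = ⊤ ↔ 𝒬.φ i x = ⊤ := by
  rw [h.phi_eq i x, wt_add_coe_eq_top]

theorem QC.IsSeminormal.eps_nonneg (h : 𝒬.IsSeminormal) (i : ι) (x : Q)
    (hx : 𝒬.ε i x ≠ ⊤) : 0 ≤ 𝒬.ε i x := by
  obtain ⟨n, hn, -⟩ := h.eps_spec i x hx
  rw [hn]
  exact_mod_cast Int.ofNat_nonneg n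

theorem QC.IsSeminormal.phi_nonneg (h : 𝒬.IsSeminormal) (i : ι) (x : Q)
    (hx : 𝒬.ε i x ≠ ⊤) : 0 ≤ 𝒬.φ i x := by
  obtain ⟨n, hn, -⟩ := h.phi_spec i x hx
  rw [hn]
  exact_mod_cast Int.ofNat_nonneg n

theorem QC.IsSeminormal.isSome_e_iff (h : 𝒬.IsSeminormal) (i : ι) (x : Q)
    (hx : 𝒬.ε i x ≠ ⊤) : (𝒬.e i x).isSome ↔ 0 < 𝒬.ε i x := by
  obtain ⟨n, hn, hmem, hub⟩ := h.eps_spec i x hx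
  rw [hn]
  constructor
  · intro hs
    have h1 : (1 : ℕ) ∈ {k : ℕ | (optIter (𝒬.e i) k x).isSome} := by
      simpa [optIter_one] using hs
    have := hub h1
    exact_mod_cast Nat.cast_pos.mpr this
  · intro hpos
    have hn1 : 1 ≤ n := by exact_mod_cast hpos
    have := optIter_isSome_of_le (𝒬.e i) hn1 hmem
    simpa [optIter_one] using this

theorem QC.IsSeminormal.isSome_f_iff (h : 𝒬.IsSeminormal) (i : ι) (x : Q)
    (hx : 𝒬.ε i x ≠ ⊤) : (𝒬.f i x).isSome ↔ 0 < 𝒬.φ i x := by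
  obtain ⟨n, hn, hmem, hub⟩ := h.phi_spec i x hx
  rw [hn]
  constructor
  · intro hs
    have h1 : (1 : ℕ) ∈ {k : ℕ | (optIter (𝒬.f i) k x).isSome} := by
      simpa [optIter_one] using hs
    have := hub h1
    exact_mod_cast Nat.cast_pos.mpr this
  · intro hpos
    have hn1 : 1 ≤ n := by exact_mod_cast hpos
    have := optIter_isSome_of_le (𝒬.f i) hn1 hmem
    simpa [optIter_one] using this

theorem QC.IsSeminormal.e_step (h : 𝒬.IsSeminormal) (i : ι) (x y : Q)
    (hxy : 𝒬.e i x = some y) :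
    𝒬.ε i x ≠ ⊤ ∧ 𝒬.ε i y ≠ ⊤ ∧ 𝒬.ε i y + 1 = 𝒬.ε i x ∧ 𝒬.φ i y = 𝒬.φ i x + 1 := by
  have hfy : 𝒬.f i y = some x := (h.e_iff_f i x y).mp hxy
  have hx : 𝒬.ε i x ≠ ⊤ := by
    intro hc
    rw [h.e_of_top i x hc] at hxy
    exact absurd hxy (by simp)
  have hy : 𝒬.ε i y ≠ ⊤ := by
    intro hc
    rw [h.f_of_top i y hc] at hfy
    exact absurd hfy (by simp)
  obtain ⟨n, hn, hmemn, hubn⟩ := h.eps_spec i x hx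
  obtain ⟨m, hm, hmemm, hubm⟩ := h.eps_spec i y hy
  have hiter : ∀ k, optIter (𝒬.e i) (k + 1) x = optIter (𝒬.e i) k y := fun k =>
    optIter_succ_apply (𝒬.e i) k x y hxy
  have hmn : m + 1 ≤ n := by
    apply hubn
    show (optIter (𝒬.e i) (m + 1) x).isSome
    rw [hiter m]
    exact hmemm
  have hn1 : 1 ≤ n := by
    apply hubn
    show (optIter (𝒬.e i) 1 x).isSome
    rw [optIter_one, hxy]
    rfl
  have hnm : n - 1 ≤ m := by
    apply hubm
    show (optIter (𝒬.e i) (n - 1) y).isSome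
    rw [← hiter (n - 1), Nat.sub_add_cancel hn1]
    exact hmemn
  have heq : n = m + 1 := by omega
  have heps : 𝒬.ε i y + 1 = 𝒬.ε i x := by
    rw [hn, hm, heq]
    push_cast
    rfl
  refine ⟨hx, hy, heps, ?_⟩
  have hwt : (𝒬.wt y : V) = (𝒬.wt x : V) + S.simple i := h.wt_e i x y hxy
  have hpair : S.pair (𝒬.wt y) i = S.pair (𝒬.wt x) i + 2 :=
    S.pair_add_simple (𝒬.wt x) (𝒬.wt y) i hwt
  rw [h.phi_eq i y, h.phi_eq i x, hpair, hm, hn, heq]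
  have : ((m : ℤ) + (S.pair (𝒬.wt x) i + 2) : ℤ) = (((m : ℤ) + 1) + S.pair (𝒬.wt x) i + 1 : ℤ) := by
    ring
  exact_mod_cast this

theorem QC.IsSeminormal.f_step (h : 𝒬.IsSeminormal) (i : ι) (x y : Q)
    (hxy : 𝒬.f i x = some y) :
    𝒬.ε i x ≠ ⊤ ∧ 𝒬.ε i y ≠ ⊤ ∧ 𝒬.ε i x + 1 = 𝒬.ε i y ∧ 𝒬.φ i x = 𝒬.φ i y + 1 := by
  have := h.e_step i y x ((h.e_iff_f i y x).mpr hxy)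
  tauto

end Aux

section Word

variable {S : QCSetting V ι} {Q : Type*} {𝒬 : QC S Q}

theorem freeWt_cons (x : Q) (w : List Q) :
    freeWt 𝒬 (x :: w) = 𝒬.wt x + freeWt 𝒬 w := rfl

theorem freeEps_cons (i : ι) (x : Q) (w : List Q) :
    freeEps 𝒬 i (x :: w) =
      max (𝒬.ε i x) (freeEps 𝒬 i w + ((-(S.pair (𝒬.wt x) i) : ℤ) : WithTop ℤ)) := rfl

theorem freePhi_cons (i : ι) (x : Q) (w : List Q) :
    freePhi 𝒬 i (x :: w) =
      max (𝒬.φ i x + ((S.pair (freeWt 𝒬 w) i : ℤ) : WithTop ℤ)) (freePhi 𝒬 i w) := rfl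

theorem freeE_cons (i : ι) (x : Q) (w : List Q) :
    freeE 𝒬 i (x :: w) = if freeEps 𝒬 i w ≤ 𝒬.φ i x
      then (𝒬.e i x).map (· :: w) else (freeE 𝒬 i w).map (x :: ·) := rfl

theorem freeF_cons (i : ι) (x : Q) (w : List Q) :
    freeF 𝒬 i (x :: w) = if freeEps 𝒬 i w < 𝒬.φ i x
      then (𝒬.f i x).map (· :: w) else (freeF 𝒬 i w).map (x :: ·) := rfl

theorem key1 (a b : WithTop ℤ) (p q : ℤ) :
    max (a + (p : WithTop ℤ) + (q : WithTop ℤ)) (b + (q : WithTop ℤ))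
      = max a (b + ((-p : ℤ) : WithTop ℤ)) + ((p + q : ℤ) : WithTop ℤ) := by
  rw [← max_add_add_right]
  congr 1
  · rw [add_assoc, ← WithTop.coe_add]
  · rw [add_assoc, ← WithTop.coe_add]
    congr 1
    exact_mod_cast (by ring : q = -p + (p + q))

theorem freePhi_eq (h : 𝒬.IsSeminormal) (i : ι) (l : List Q) :
    freePhi 𝒬 i l = freeEps 𝒬 i l + ((S.pair (freeWt 𝒬 l) i : ℤ) : WithTop ℤ) := by
  induction l with
  | nil =>
    show (0 : WithTop ℤ) = 0 + ((S.pair 0 i : ℤ) : WithTop ℤ)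
    rw [S.pair_zero']
    simp
  | cons x w ih =>
    rw [freePhi_cons, freeEps_cons, freeWt_cons, S.pair_add', ih, h.phi_eq i x]
    exact key1 _ _ _ _

theorem wt_ne_top_of_add {a : WithTop ℤ} {c : ℤ} (h : a + (c : WithTop ℤ) ≠ ⊤) :
    a ≠ ⊤ :=
  fun ha => h (by rw [ha, top_add])

theorem ne_top_of_max_left {a b : WithTop ℤ} (h : max a b ≠ ⊤) : a ≠ ⊤ :=
  fun ha => h (eq_top_mono (le_max_left a b) ha)

theorem ne_top_of_max_right {a b : WithTop ℤ} (h : max a b ≠ ⊤) : b ≠ ⊤ :=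
  fun hb => h (eq_top_mono (le_max_right a b) hb)

theorem freeEps_cons_ne_top {i : ι} {x : Q} {w : List Q}
    (h : freeEps 𝒬 i (x :: w) ≠ ⊤) : 𝒬.ε i x ≠ ⊤ ∧ freeEps 𝒬 i w ≠ ⊤ := by
  rw [freeEps_cons] at h
  refine ⟨ne_top_of_max_left h, ?_⟩
  exact wt_ne_top_of_add (ne_top_of_max_right h)

theorem freeEps_nonneg (h : 𝒬.IsSeminormal) (i : ι) (l : List Q)
    (hl : freeEps 𝒬 i l ≠ ⊤) : 0 ≤ freeEps 𝒬 i l := by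
  cases l with
  | nil => exact le_refl 0
  | cons x w =>
    obtain ⟨hx, -⟩ := freeEps_cons_ne_top hl
    rw [freeEps_cons]
    exact le_trans (h.eps_nonneg i x hx) (le_max_left _ _)

theorem freePhi_nonneg (h : 𝒬.IsSeminormal) (i : ι) (l : List Q)
    (hl : freeEps 𝒬 i l ≠ ⊤) : 0 ≤ freePhi 𝒬 i l := by
  induction l with
  | nil => exact le_refl 0
  | cons x w ih =>
    obtain ⟨-, hw⟩ := freeEps_cons_ne_top hl
    rw [freePhi_cons]
    exact le_trans (ih hw) (le_max_right _ _)

theorem freeE_none_of_top (h : 𝒬.IsSeminormal) (i : ι) (l : List Q)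
    (hl : freeEps 𝒬 i l = ⊤) : freeE 𝒬 i l = none := by
  induction l with
  | nil => rfl
  | cons x w ih =>
    rw [freeEps_cons, max_eq_top] at hl
    rw [freeE_cons]
    rcases hl with hx | hw
    · rw [if_pos, h.e_of_top i x hx]
      · rfl
      · rw [(h.eps_top_iff_phi i x).mp hx]
        exact le_top
    · rw [wt_add_coe_eq_top] at hw
      by_cases hc : freeEps 𝒬 i w ≤ 𝒬.φ i x
      · rw [hw, top_le_iff] at hc
        rw [if_pos, h.e_of_top i x ((h.eps_top_iff_phi i x).mpr hc)]
        · rfl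
        · rw [hc]; exact le_top
      · rw [if_neg hc, ih hw]
        rfl

theorem freeF_none_of_top (h : 𝒬.IsSeminormal) (i : ι) (l : List Q)
    (hl : freeEps 𝒬 i l = ⊤) : freeF 𝒬 i l = none := by
  induction l with
  | nil => rfl
  | cons x w ih =>
    rw [freeEps_cons, max_eq_top] at hl
    rw [freeF_cons]
    by_cases hc : freeEps 𝒬 i w < 𝒬.φ i x
    · have hw : freeEps 𝒬 i w ≠ ⊤ := ne_top_of_lt hc
      have hx : 𝒬.ε i x = ⊤ := by
        rcases hl with hx | hw'
        · exact hx
        · exact absurd ((wt_add_coe_eq_top _).mp hw') hw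
      rw [if_pos hc, h.f_of_top i x hx]
      rfl
    · have hw : freeEps 𝒬 i w = ⊤ := by
        rcases hl with hx | hw'
        · have : 𝒬.φ i x ≤ freeEps 𝒬 i w := not_lt.mp hc
          rw [(h.eps_top_iff_phi i x).mp hx, top_le_iff] at this
          exact this
        · exact (wt_add_coe_eq_top _).mp hw'
      rw [if_neg hc, ih hw]
      rfl

end Word

section Step

variable {S : QCSetting V ι} {Q : Type*} {𝒬 : QC S Q}

theorem wt_exists_coe {a : WithTop ℤ} (ha : a ≠ ⊤) : ∃ n : ℤ, a = (n : WithTop ℤ) :=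
  ⟨a.untop ha, (WithTop.coe_untop a ha).symm⟩

theorem freeE_step (h : 𝒬.IsSeminormal) (i : ι) :
    ∀ l m : List Q, freeE 𝒬 i l = some m →
      freeEps 𝒬 i l ≠ ⊤ ∧ freeEps 𝒬 i m ≠ ⊤ ∧ freeEps 𝒬 i m + 1 = freeEps 𝒬 i l ∧
      freePhi 𝒬 i m = freePhi 𝒬 i l + 1 ∧ freeF 𝒬 i m = some l ∧
      (freeWt 𝒬 m : V) = (freeWt 𝒬 l : V) + S.simple i := by
  intro l
  induction l with
  | nil => intro m hm; exact absurd hm (by simp [freeE])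
  | cons x w ih =>
    intro m hm
    rw [freeE_cons] at hm
    by_cases hc : freeEps 𝒬 i w ≤ 𝒬.φ i x
    · rw [if_pos hc] at hm
      obtain ⟨y, hy, rfl⟩ := Option.map_eq_some_iff.mp hm
      obtain ⟨hεx, hεy, hey, hpy⟩ := h.e_step i x y hy
      have hφx : 𝒬.φ i x ≠ ⊤ := fun hc' => hεx ((h.eps_top_iff_phi i x).mpr hc')
      have hwtop : freeEps 𝒬 i w ≠ ⊤ := ne_top_of_le_ne_top hφx hc
      obtain ⟨a, ha⟩ := wt_exists_coe hεx
      obtain ⟨a', ha'⟩ := wt_exists_coe hεy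
      obtain ⟨b, hb⟩ := wt_exists_coe hwtop
      set p := S.pair (𝒬.wt x) i with hp
      set q := S.pair (freeWt 𝒬 w) i with hq
      have haa : a' + 1 = a := by
        rw [ha, ha'] at hey
        exact_mod_cast hey
      have hφxv : 𝒬.φ i x = ((a + p : ℤ) : WithTop ℤ) := by
        rw [h.phi_eq i x, ha, ← hp, WithTop.coe_add]
      have hcc : b ≤ a + p := by
        rw [hb, hφxv] at hc
        exact_mod_cast hc
      have hwty : (𝒬.wt y : V) = (𝒬.wt x : V) + S.simple i := h.wt_e i x y hy
      have hpy2 : S.pair (𝒬.wt y) i = p + 2 := S.pair_add_simple _ _ i hwty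
      have hE1 : freeEps 𝒬 i (x :: w) = ((a : ℤ) : WithTop ℤ) := by
        rw [freeEps_cons, ha, hb, ← hp, ← WithTop.coe_add, max_eq_left]
        exact_mod_cast (by omega : b + -p ≤ a)
      have hE2 : freeEps 𝒬 i (y :: w) = ((a' : ℤ) : WithTop ℤ) := by
        rw [freeEps_cons, ha', hb, hpy2, ← WithTop.coe_add, max_eq_left]
        exact_mod_cast (by omega : b + -(p + 2) ≤ a')
      refine ⟨by rw [hE1]; exact WithTop.coe_ne_top, by rw [hE2]; exact WithTop.coe_ne_top,
        ?_, ?_, ?_, ?_⟩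
      · rw [hE1, hE2, ← WithTop.coe_one, ← WithTop.coe_add]
        exact_mod_cast (by omega : a' + 1 = a)
      · rw [freePhi_eq h, freePhi_eq h, hE1, hE2, freeWt_cons, freeWt_cons,
          S.pair_add', S.pair_add', hpy2, ← hp, ← hq, ← WithTop.coe_add,
          ← WithTop.coe_add, ← WithTop.coe_one, ← WithTop.coe_add]
        exact_mod_cast (by omega : a' + (p + 2 + q) = a + (p + q) + 1)
      · rw [freeF_cons, if_pos, (h.e_iff_f i x y).mp hy]
        · rfl
        · rw [hb, hpy, hφxv, ← WithTop.coe_one, ← WithTop.coe_add]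
          exact_mod_cast (by omega : b < a + p + 1)
      · rw [freeWt_cons, freeWt_cons]
        push_cast
        rw [hwty]
        abel
    · rw [if_neg hc] at hm
      obtain ⟨t, ht, rfl⟩ := Option.map_eq_some_iff.mp hm
      obtain ⟨hwtop, httop, heq, hphi, hfF, hwt⟩ := ih t ht
      have hlt : 𝒬.φ i x < freeEps 𝒬 i w := not_le.mp hc
      have hφx : 𝒬.φ i x ≠ ⊤ := ne_top_of_lt hlt
      have hεx : 𝒬.ε i x ≠ ⊤ := fun hc' => hφx ((h.eps_top_iff_phi i x).mp hc')
      obtain ⟨a, ha⟩ := wt_exists_coe hεx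
      obtain ⟨b, hb⟩ := wt_exists_coe hwtop
      obtain ⟨b', hb'⟩ := wt_exists_coe httop
      set p := S.pair (𝒬.wt x) i with hp
      set q := S.pair (freeWt 𝒬 w) i with hq
      have hbb : b' + 1 = b := by
        rw [hb, hb'] at heq
        exact_mod_cast heq
      have hφxv : 𝒬.φ i x = ((a + p : ℤ) : WithTop ℤ) := by
        rw [h.phi_eq i x, ha, ← hp, WithTop.coe_add]
      have hcc : a + p < b := by
        rw [hb, hφxv] at hlt
        exact_mod_cast hlt
      have hqt : S.pair (freeWt 𝒬 t) i = q + 2 := S.pair_add_simple _ _ i hwt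
      have hE1 : freeEps 𝒬 i (x :: w) = ((b + -p : ℤ) : WithTop ℤ) := by
        rw [freeEps_cons, ha, hb, ← hp, ← WithTop.coe_add, max_eq_right]
        exact_mod_cast (by omega : a ≤ b + -p)
      have hE2 : freeEps 𝒬 i (x :: t) = ((b' + -p : ℤ) : WithTop ℤ) := by
        rw [freeEps_cons, ha, hb', ← hp, ← WithTop.coe_add, max_eq_right]
        exact_mod_cast (by omega : a ≤ b' + -p)
      refine ⟨by rw [hE1]; exact WithTop.coe_ne_top, by rw [hE2]; exact WithTop.coe_ne_top,
        ?_, ?_, ?_, ?_⟩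
      · rw [hE1, hE2, ← WithTop.coe_one, ← WithTop.coe_add]
        exact_mod_cast (by omega : b' + -p + 1 = b + -p)
      · rw [freePhi_eq h, freePhi_eq h, hE1, hE2, freeWt_cons, freeWt_cons,
          S.pair_add', S.pair_add', hqt, ← hp, ← hq, ← WithTop.coe_add,
          ← WithTop.coe_add, ← WithTop.coe_one, ← WithTop.coe_add]
        exact_mod_cast (by omega : b' + -p + (p + (q + 2)) = b + -p + (p + q) + 1)
      · rw [freeF_cons, if_neg, hfF]
        · rfl
        · rw [hb', hφxv, not_lt]
          exact_mod_cast (by omega : a + p ≤ b')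
      · rw [freeWt_cons, freeWt_cons]
        push_cast
        rw [hwt]
        abel

theorem freeF_step (h : 𝒬.IsSeminormal) (i : ι) :
    ∀ l m : List Q, freeF 𝒬 i l = some m → freeE 𝒬 i m = some l := by
  intro l
  induction l with
  | nil => intro m hm; exact absurd hm (by simp [freeF])
  | cons x w ih =>
    intro m hm
    rw [freeF_cons] at hm
    by_cases hc : freeEps 𝒬 i w < 𝒬.φ i x
    · rw [if_pos hc] at hm
      obtain ⟨y, hy, rfl⟩ := Option.map_eq_some_iff.mp hm
      obtain ⟨hεx, hεy, hey, hpy⟩ := h.f_step i x y hy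
      have hφx : 𝒬.φ i x ≠ ⊤ := fun hc' => hεx ((h.eps_top_iff_phi i x).mpr hc')
      have hφy : 𝒬.φ i y ≠ ⊤ := by
        intro hc'
        rw [hpy, hc', top_add] at hφx
        exact hφx rfl
      have hwtop : freeEps 𝒬 i w ≠ ⊤ := ne_top_of_lt hc
      obtain ⟨b, hb⟩ := wt_exists_coe hwtop
      obtain ⟨c, hcv⟩ := wt_exists_coe hφx
      obtain ⟨c', hcv'⟩ := wt_exists_coe hφy
      have hccv : c = c' + 1 := by
        rw [hcv, hcv'] at hpy
        exact_mod_cast hpy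
      have hbc : b < c := by
        rw [hb, hcv] at hc
        exact_mod_cast hc
      rw [freeE_cons, if_pos, (h.e_iff_f i y x).mpr hy]
      · rfl
      · rw [hb, hcv']
        exact_mod_cast (by omega : b ≤ c')
    · rw [if_neg hc] at hm
      obtain ⟨t, ht, rfl⟩ := Option.map_eq_some_iff.mp hm
      have het : freeE 𝒬 i t = some w := ih t ht
      obtain ⟨httop, hwtop, heq, -, -, -⟩ := freeE_step h i t w het
      have hle : 𝒬.φ i x ≤ freeEps 𝒬 i w := not_lt.mp hc
      have hφx : 𝒬.φ i x ≠ ⊤ := ne_top_of_le_ne_top hwtop hle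
      obtain ⟨b, hb⟩ := wt_exists_coe hwtop
      obtain ⟨b', hb'⟩ := wt_exists_coe httop
      obtain ⟨c, hcv⟩ := wt_exists_coe hφx
      have hbb : b + 1 = b' := by
        rw [hb, hb'] at heq
        exact_mod_cast heq
      have hcb : c ≤ b := by
        rw [hb, hcv] at hle
        exact_mod_cast hle
      rw [freeE_cons, if_neg, het]
      · rfl
      · rw [hb', hcv, not_le]
        exact_mod_cast (by omega : c < b')

end Step

section Some

variable {S : QCSetting V ι} {Q : Type*} {𝒬 : QC S Q}

theorem freeE_isSome_iff (h : 𝒬.IsSeminormal) (i : ι) :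
    ∀ l : List Q, freeEps 𝒬 i l ≠ ⊤ → ((freeE 𝒬 i l).isSome ↔ 0 < freeEps 𝒬 i l) := by
  intro l
  induction l with
  | nil =>
    intro _
    constructor
    · intro hs; exact absurd hs (by simp [freeE])
    · intro hp; exact absurd hp (by simp [freeEps])
  | cons x w ih =>
    intro hl
    obtain ⟨hεx, hw⟩ := freeEps_cons_ne_top hl
    obtain ⟨a, ha⟩ := wt_exists_coe hεx
    obtain ⟨b, hb⟩ := wt_exists_coe hw
    set p := S.pair (𝒬.wt x) i with hp
    have ha0 : 0 ≤ a := by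
      have := h.eps_nonneg i x hεx
      rw [ha] at this
      exact_mod_cast this
    have hb0 : 0 ≤ b := by
      have := freeEps_nonneg h i w hw
      rw [hb] at this
      exact_mod_cast this
    have hφxv : 𝒬.φ i x = ((a + p : ℤ) : WithTop ℤ) := by
      rw [h.phi_eq i x, ha, ← hp, WithTop.coe_add]
    have hφ0 : 0 ≤ a + p := by
      have := h.phi_nonneg i x hεx
      rw [hφxv] at this
      exact_mod_cast this
    rw [freeE_cons]
    by_cases hc : freeEps 𝒬 i w ≤ 𝒬.φ i x
    · have hba : b ≤ a + p := by
        rw [hb, hφxv] at hc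
        exact_mod_cast hc
      have hE1 : freeEps 𝒬 i (x :: w) = ((a : ℤ) : WithTop ℤ) := by
        rw [freeEps_cons, ha, hb, ← hp, ← WithTop.coe_add, max_eq_left]
        exact_mod_cast (by omega : b + -p ≤ a)
      rw [if_pos hc, Option.isSome_map, h.isSome_e_iff i x hεx, hE1, ha]
    · have hba : a + p < b := by
        rw [not_le, hb, hφxv] at hc
        exact_mod_cast hc
      have hE1 : freeEps 𝒬 i (x :: w) = ((b + -p : ℤ) : WithTop ℤ) := by
        rw [freeEps_cons, ha, hb, ← hp, ← WithTop.coe_add, max_eq_right]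
        exact_mod_cast (by omega : a ≤ b + -p)
      rw [if_neg hc, Option.isSome_map, ih hw, hE1, hb]
      constructor
      · intro _
        exact_mod_cast (by omega : (0:ℤ) < b + -p)
      · intro _
        exact_mod_cast (by omega : (0:ℤ) < b)

theorem freeF_isSome_iff (h : 𝒬.IsSeminormal) (i : ι) :
    ∀ l : List Q, freeEps 𝒬 i l ≠ ⊤ → ((freeF 𝒬 i l).isSome ↔ 0 < freePhi 𝒬 i l) := by
  intro l
  induction l with
  | nil =>
    intro _
    constructor
    · intro hs; exact absurd hs (by simp [freeF])
    · intro hp; exact absurd hp (by simp [freePhi])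
  | cons x w ih =>
    intro hl
    obtain ⟨hεx, hw⟩ := freeEps_cons_ne_top hl
    obtain ⟨a, ha⟩ := wt_exists_coe hεx
    obtain ⟨b, hb⟩ := wt_exists_coe hw
    set p := S.pair (𝒬.wt x) i with hp
    set q := S.pair (freeWt 𝒬 w) i with hq
    have hb0 : 0 ≤ b := by
      have := freeEps_nonneg h i w hw
      rw [hb] at this
      exact_mod_cast this
    have hφxv : 𝒬.φ i x = ((a + p : ℤ) : WithTop ℤ) := by
      rw [h.phi_eq i x, ha, ← hp, WithTop.coe_add]
    have hphiw : freePhi 𝒬 i w = ((b + q : ℤ) : WithTop ℤ) := by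
      rw [freePhi_eq h, hb, ← hq, WithTop.coe_add]
    have hphiw0 : 0 ≤ b + q := by
      have := freePhi_nonneg h i w hw
      rw [hphiw] at this
      exact_mod_cast this
    have hPhiCons : freePhi 𝒬 i (x :: w) =
        max (((a + p + q : ℤ) : WithTop ℤ)) (((b + q : ℤ) : WithTop ℤ)) := by
      rw [freePhi_cons, hφxv, hphiw, ← hq, ← WithTop.coe_add]
    rw [freeF_cons]
    by_cases hc : freeEps 𝒬 i w < 𝒬.φ i x
    · have hba : b < a + p := by
        rw [hb, hφxv] at hc
        exact_mod_cast hc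
      have hE1 : freePhi 𝒬 i (x :: w) = ((a + p + q : ℤ) : WithTop ℤ) := by
        rw [hPhiCons, max_eq_left]
        exact_mod_cast (by omega : b + q ≤ a + p + q)
      rw [if_pos hc, Option.isSome_map, h.isSome_f_iff i x hεx, hE1, hφxv]
      constructor
      · intro _
        exact_mod_cast (by omega : (0:ℤ) < a + p + q)
      · intro _
        exact_mod_cast (by omega : (0:ℤ) < a + p)
    · have hba : a + p ≤ b := by
        rw [not_lt, hb, hφxv] at hc
        exact_mod_cast hc
      have hE1 : freePhi 𝒬 i (x :: w) = ((b + q : ℤ) : WithTop ℤ) := by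
        rw [hPhiCons, max_eq_right]
        exact_mod_cast (by omega : a + p + q ≤ b + q)
      rw [if_neg hc, Option.isSome_map, ih hw, hE1, hphiw]

end Some

section Greatest

theorem isGreatest_optIter {A : Type*} (g : A → Option A) (μ : A → WithTop ℤ)
    (hstep : ∀ a b, g a = some b → μ b + 1 = μ a)
    (hiff : ∀ a, μ a ≠ ⊤ → ((g a).isSome ↔ 0 < μ a))
    (a : A) (n : ℕ) (hn : μ a = ((n : ℤ) : WithTop ℤ)) :
    IsGreatest {k : ℕ | (optIter g k a).isSome} n := by
  have aux : ∀ k, k ≤ n → ∃ b, optIter g k a = some b ∧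
      μ b = (((n : ℤ) - k : ℤ) : WithTop ℤ) := by
    intro k
    induction k with
    | zero =>
      intro _
      exact ⟨a, rfl, by rw [hn]; norm_num⟩
    | succ k ihk =>
      intro hk
      obtain ⟨b, hb, hμb⟩ := ihk (by omega)
      have hbne : μ b ≠ ⊤ := by rw [hμb]; exact WithTop.coe_ne_top
      have hpos : 0 < μ b := by
        rw [hμb]
        exact_mod_cast (by omega : (0:ℤ) < (n:ℤ) - k)
      obtain ⟨c, hc⟩ := Option.isSome_iff_exists.mp ((hiff b hbne).mpr hpos)
      refine ⟨c, ?_, ?_⟩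
      · rw [optIter_succ, hb]
        exact hc
      · have := hstep b c hc
        rw [hμb] at this
        have hcne : μ c ≠ ⊤ := by
          intro hcc
          rw [hcc, top_add] at this
          exact WithTop.coe_ne_top this.symm
        obtain ⟨z, hz⟩ := wt_exists_coe hcne
        rw [hz, ← WithTop.coe_one, ← WithTop.coe_add] at this
        rw [hz]
        have hzz : z + 1 = (n : ℤ) - k := by exact_mod_cast this
        have : z = (n : ℤ) - (k + 1 : ℕ) := by push_cast; omega
        rw [this]
  constructor
  · obtain ⟨b, hb, -⟩ := aux n le_rfl
    show (optIter g n a).isSome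
    rw [hb]
    rfl
  · intro k hk
    by_contra hcon
    have hnk : n + 1 ≤ k := by omega
    obtain ⟨b, hb, hμb⟩ := aux n le_rfl
    have hzero : μ b = 0 := by rw [hμb]; norm_num
    have hgb : g b = none := by
      by_contra hgb
      have : (g b).isSome := Option.ne_none_iff_isSome.mp hgb
      have := (hiff b (by rw [hzero]; exact (by simp : (0 : WithTop ℤ) ≠ ⊤))).mp this
      rw [hzero] at this
      exact absurd this (lt_irrefl 0)
    have hnone : optIter g (n + 1) a = none := by
      rw [optIter_succ, hb]
      exact hgb
    have := optIter_none_of_none g (n + 1) (k - (n + 1)) a hnone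
    rw [Nat.add_sub_cancel' hnk] at this
    have hks : (optIter g k a).isSome := hk
    rw [this] at hks
    simp at hks

end Greatest

section Append

variable {S : QCSetting V ι} {Q : Type*} {𝒬 : QC S Q}

theorem wt_cancel_le (a b : WithTop ℤ) (c : ℤ) :
    a + (c : WithTop ℤ) ≤ b + (c : WithTop ℤ) ↔ a ≤ b :=
  WithTop.add_le_add_iff_right WithTop.coe_ne_top

theorem wt_cancel_lt (a b : WithTop ℤ) (c : ℤ) :
    a + (c : WithTop ℤ) < b + (c : WithTop ℤ) ↔ a < b :=
  WithTop.add_lt_add_iff_right WithTop.coe_ne_top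

theorem wt_neg_add_cancel (a : WithTop ℤ) (c : ℤ) :
    a + ((-c : ℤ) : WithTop ℤ) + (c : WithTop ℤ) = a := by
  rw [add_assoc, ← WithTop.coe_add, neg_add_cancel, WithTop.coe_zero, add_zero]

theorem wt_add_neg_cancel (a : WithTop ℤ) (c : ℤ) :
    a + (c : WithTop ℤ) + ((-c : ℤ) : WithTop ℤ) = a := by
  rw [add_assoc, ← WithTop.coe_add, add_neg_cancel, WithTop.coe_zero, add_zero]

theorem wt_shift_le (a b : WithTop ℤ) (c : ℤ) :
    a + ((-c : ℤ) : WithTop ℤ) ≤ b ↔ a ≤ b + (c : WithTop ℤ) := by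
  constructor
  · intro h2
    have h3 := add_le_add_left h2 ((c : ℤ) : WithTop ℤ)
    rwa [wt_neg_add_cancel] at h3
  · intro h2
    have h3 := add_le_add_left h2 (((-c : ℤ)) : WithTop ℤ)
    rwa [wt_add_neg_cancel] at h3

theorem wt_shift_lt (a b : WithTop ℤ) (c : ℤ) :
    a + ((-c : ℤ) : WithTop ℤ) < b ↔ a < b + (c : WithTop ℤ) := by
  constructor
  · intro h2
    have h3 := (wt_cancel_lt _ _ c).mpr h2
    rwa [wt_neg_add_cancel] at h3
  · intro h2
    have h3 := (wt_cancel_lt _ _ (-c)).mpr h2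
    rwa [wt_add_neg_cancel] at h3

theorem freeWt_append (u v : List Q) :
    freeWt 𝒬 (u ++ v) = freeWt 𝒬 u + freeWt 𝒬 v := by
  induction u with
  | nil => show freeWt 𝒬 v = 0 + freeWt 𝒬 v; rw [zero_add]
  | cons x u ih =>
    show 𝒬.wt x + freeWt 𝒬 (u ++ v) = 𝒬.wt x + freeWt 𝒬 u + freeWt 𝒬 v
    rw [ih, add_assoc]

theorem key2 (a b c : WithTop ℤ) (p P : ℤ) :
    max a (max b (c + ((-P : ℤ) : WithTop ℤ)) + ((-p : ℤ) : WithTop ℤ))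
      = max (max a (b + ((-p : ℤ) : WithTop ℤ))) (c + ((-(p + P) : ℤ) : WithTop ℤ)) := by
  have hc : ((-P : ℤ) : WithTop ℤ) + ((-p : ℤ) : WithTop ℤ) = ((-(p + P) : ℤ) : WithTop ℤ) := by
    rw [← WithTop.coe_add]
    congr 1
    ring
  rw [← max_add_add_right, ← max_assoc, add_assoc, hc]

theorem freeEps_append (h : 𝒬.IsSeminormal) (i : ι) (u v : List Q) :
    freeEps 𝒬 i (u ++ v) =
      max (freeEps 𝒬 i u) (freeEps 𝒬 i v + ((-(S.pair (freeWt 𝒬 u) i) : ℤ) : WithTop ℤ)) := by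
  induction u with
  | nil =>
    show freeEps 𝒬 i v = max 0 (freeEps 𝒬 i v + ((-(S.pair 0 i) : ℤ) : WithTop ℤ))
    rw [S.pair_zero', neg_zero, WithTop.coe_zero, add_zero, max_eq_right]
    by_cases hv : freeEps 𝒬 i v = ⊤
    · rw [hv]; exact le_top
    · exact freeEps_nonneg h i v hv
  | cons x u ih =>
    rw [List.cons_append, freeEps_cons, ih, freeEps_cons, freeWt_cons, S.pair_add']
    exact key2 _ _ _ _ _

theorem key3 (a b c : WithTop ℤ) (P q : ℤ) :
    max (a + ((P + q : ℤ) : WithTop ℤ)) (max (b + ((q : ℤ) : WithTop ℤ)) c)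
      = max (max (a + ((P : ℤ) : WithTop ℤ)) b + ((q : ℤ) : WithTop ℤ)) c := by
  rw [← max_add_add_right, ← max_assoc]
  congr 2
  rw [add_assoc, ← WithTop.coe_add]

theorem freePhi_append (h : 𝒬.IsSeminormal) (i : ι) (u v : List Q) :
    freePhi 𝒬 i (u ++ v) =
      max (freePhi 𝒬 i u + ((S.pair (freeWt 𝒬 v) i : ℤ) : WithTop ℤ)) (freePhi 𝒬 i v) := by
  induction u with
  | nil =>
    show freePhi 𝒬 i v = max (0 + ((S.pair (freeWt 𝒬 v) i : ℤ) : WithTop ℤ)) (freePhi 𝒬 i v)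
    rw [zero_add, max_eq_right]
    rw [freePhi_eq h]
    by_cases hv : freeEps 𝒬 i v = ⊤
    · rw [hv, top_add]; exact le_top
    · calc ((S.pair (freeWt 𝒬 v) i : ℤ) : WithTop ℤ)
          = 0 + ((S.pair (freeWt 𝒬 v) i : ℤ) : WithTop ℤ) := (zero_add _).symm
        _ ≤ freeEps 𝒬 i v + ((S.pair (freeWt 𝒬 v) i : ℤ) : WithTop ℤ) :=
            add_le_add_left (freeEps_nonneg h i v hv) _
  | cons x u ih =>
    rw [List.cons_append, freePhi_cons, ih, freePhi_cons, freeWt_append, S.pair_add']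
    exact key3 _ _ _ _ _

theorem freeE_append (h : 𝒬.IsSeminormal) (i : ι) (u v : List Q) :
    freeE 𝒬 i (u ++ v) = if freeEps 𝒬 i v ≤ freePhi 𝒬 i u
      then (freeE 𝒬 i u).map (· ++ v) else (freeE 𝒬 i v).map (u ++ ·) := by
  induction u with
  | nil =>
    rw [List.nil_append]
    by_cases hv : freeEps 𝒬 i v ≤ freePhi 𝒬 i []
    · rw [if_pos hv]
      have h0 : freeEps 𝒬 i v ≤ 0 := hv
      have hvt : freeEps 𝒬 i v ≠ ⊤ :=
        ne_top_of_le_ne_top (by simp : (0 : WithTop ℤ) ≠ ⊤) h0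
      have heq : freeEps 𝒬 i v = 0 := le_antisymm h0 (freeEps_nonneg h i v hvt)
      have hns : ¬(freeE 𝒬 i v).isSome := by
        rw [freeE_isSome_iff h i v hvt, heq]
        exact lt_irrefl 0
      rw [Option.not_isSome_iff_eq_none.mp hns]
      rfl
    · rw [if_neg hv]
      show freeE 𝒬 i v = (freeE 𝒬 i v).map (fun t => t)
      rw [Option.map_id']
  | cons x u ih =>
    rw [List.cons_append, freeE_cons, freeEps_append h i u v, ih, freeE_cons]
    set A := 𝒬.φ i x
    set B := freeEps 𝒬 i u
    set Cv := freeEps 𝒬 i v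
    set P := S.pair (freeWt 𝒬 u) i with hP
    have hPhiU : freePhi 𝒬 i u = B + ((P : ℤ) : WithTop ℤ) := freePhi_eq h i u
    by_cases hL : max B (Cv + ((-P : ℤ) : WithTop ℤ)) ≤ A
    · obtain ⟨hL1, hL2⟩ := max_le_iff.mp hL
      have hR : Cv ≤ max (A + ((P : ℤ) : WithTop ℤ)) (freePhi 𝒬 i u) :=
        le_trans ((wt_shift_le Cv A P).mp hL2) (le_max_left _ _)
      rw [if_pos hL, freePhi_cons, if_pos hR, if_pos hL1]
      simp only [Option.map_map]
      rfl
    · rw [if_neg hL]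
      by_cases hR1 : Cv ≤ freePhi 𝒬 i u
      · have hR1' : Cv ≤ B + ((P : ℤ) : WithTop ℤ) := by rwa [hPhiU] at hR1
        have hBu : ¬(B ≤ A) := by
          intro hBA
          apply hL
          rw [max_le_iff]
          refine ⟨hBA, ?_⟩
          calc Cv + ((-P : ℤ) : WithTop ℤ)
              ≤ B + ((P : ℤ) : WithTop ℤ) + ((-P : ℤ) : WithTop ℤ) :=
                add_le_add_left hR1' _
            _ = B := wt_add_neg_cancel B P
            _ ≤ A := hBA
        have hR : Cv ≤ max (A + ((P : ℤ) : WithTop ℤ)) (freePhi 𝒬 i u) :=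
          le_trans hR1 (le_max_right _ _)
        rw [if_pos hR1, freePhi_cons, if_pos hR, if_neg hBu]
        simp only [Option.map_map]
        rfl
      · have hR : ¬(Cv ≤ max (A + ((P : ℤ) : WithTop ℤ)) (freePhi 𝒬 i u)) := by
          intro hcon
          rcases le_max_iff.mp hcon with h1 | h1
          · have h2 : Cv + ((-P : ℤ) : WithTop ℤ) ≤ A := (wt_shift_le Cv A P).mpr h1
            have h3 : ¬(B ≤ A) := fun hBA => hL (max_le_iff.mpr ⟨hBA, h2⟩)
            have h4 : A < B := not_le.mp h3
            apply hR1
            calc Cv ≤ A + ((P : ℤ) : WithTop ℤ) := h1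
              _ ≤ B + ((P : ℤ) : WithTop ℤ) := add_le_add_left h4.le _
              _ = freePhi 𝒬 i u := hPhiU.symm
          · exact hR1 h1
        rw [if_neg hR1, freePhi_cons, if_neg hR]
        simp only [Option.map_map]
        rfl

theorem freeF_append (h : 𝒬.IsSeminormal) (i : ι) (u v : List Q) :
    freeF 𝒬 i (u ++ v) = if freeEps 𝒬 i v < freePhi 𝒬 i u
      then (freeF 𝒬 i u).map (· ++ v) else (freeF 𝒬 i v).map (u ++ ·) := by
  induction u with
  | nil =>
    rw [List.nil_append]
    have hnv : ¬(freeEps 𝒬 i v < freePhi 𝒬 i []) := by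
      intro hcon
      have h0 : freeEps 𝒬 i v < 0 := hcon
      have hvt : freeEps 𝒬 i v ≠ ⊤ := ne_top_of_lt h0
      exact absurd h0 (not_lt.mpr (freeEps_nonneg h i v hvt))
    rw [if_neg hnv]
    show freeF 𝒬 i v = (freeF 𝒬 i v).map (fun t => t)
    rw [Option.map_id']
  | cons x u ih =>
    rw [List.cons_append, freeF_cons, freeEps_append h i u v, ih, freeF_cons]
    set A := 𝒬.φ i x
    set B := freeEps 𝒬 i u
    set Cv := freeEps 𝒬 i v
    set P := S.pair (freeWt 𝒬 u) i with hP
    have hPhiU : freePhi 𝒬 i u = B + ((P : ℤ) : WithTop ℤ) := freePhi_eq h i u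
    by_cases hL : max B (Cv + ((-P : ℤ) : WithTop ℤ)) < A
    · obtain ⟨hL1, hL2⟩ := max_lt_iff.mp hL
      have hR : Cv < max (A + ((P : ℤ) : WithTop ℤ)) (freePhi 𝒬 i u) :=
        lt_of_lt_of_le ((wt_shift_lt Cv A P).mp hL2) (le_max_left _ _)
      rw [if_pos hL, freePhi_cons, if_pos hR, if_pos hL1]
      simp only [Option.map_map]
      rfl
    · rw [if_neg hL]
      by_cases hR1 : Cv < freePhi 𝒬 i u
      · have hR1' : Cv < B + ((P : ℤ) : WithTop ℤ) := by rwa [hPhiU] at hR1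
        have hR : Cv < max (A + ((P : ℤ) : WithTop ℤ)) (freePhi 𝒬 i u) :=
          lt_of_lt_of_le hR1 (le_max_right _ _)
        have hBu : ¬(B < A) := by
          intro hBA
          have h2 : ¬(Cv + ((-P : ℤ) : WithTop ℤ) < A) :=
            fun hc => hL (max_lt_iff.mpr ⟨hBA, hc⟩)
          have h3 : A ≤ Cv + ((-P : ℤ) : WithTop ℤ) := not_lt.mp h2
          have h4 : A + ((P : ℤ) : WithTop ℤ) ≤ Cv := by
            have h5 := add_le_add_left h3 ((P : ℤ) : WithTop ℤ)
            rwa [wt_neg_add_cancel] at h5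
          have h6 : A + ((P : ℤ) : WithTop ℤ) < B + ((P : ℤ) : WithTop ℤ) :=
            lt_of_le_of_lt h4 hR1'
          have h7 : A < B := (wt_cancel_lt A B P).mp h6
          exact absurd hBA (not_lt.mpr h7.le)
        rw [if_pos hR1, freePhi_cons, if_pos hR, if_neg hBu]
        simp only [Option.map_map]
        rfl
      · have hR : ¬(Cv < max (A + ((P : ℤ) : WithTop ℤ)) (freePhi 𝒬 i u)) := by
          intro hcon
          rcases lt_max_iff.mp hcon with h1 | h1
          · have h2 : Cv + ((-P : ℤ) : WithTop ℤ) < A := (wt_shift_lt Cv A P).mpr h1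
            have h3 : ¬(B < A) := fun hc => hL (max_lt_iff.mpr ⟨hc, h2⟩)
            have h4 : A ≤ B := not_lt.mp h3
            apply hR1
            calc Cv < A + ((P : ℤ) : WithTop ℤ) := h1
              _ ≤ B + ((P : ℤ) : WithTop ℤ) := add_le_add_left h4 _
              _ = freePhi 𝒬 i u := hPhiU.symm
          · exact hR1 h1
        rw [if_neg hR1, freePhi_cons, if_neg hR]
        simp only [Option.map_map]
        rfl

end Append

/-- The free `⊗`-quasi-crystal monoid `F^⊗(Q)` over a seminormal
quasi-crystal `Q` is a `⊗`-quasi-crystal monoid of the same type; moreover its weight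
map satisfies `wt(x₁x₂⋯x_m) = wt(x₁) + wt(x₂) + ⋯ + wt(x_m)` for letters `x₁, …, x_m`. -/
theorem freeTensor_isTensorQCMon {V : Type*} [NormedAddCommGroup V]
    [InnerProductSpace ℝ V] {ι : Type*} {S : QCSetting V ι} {Q : Type*}
    (𝒬 : QC S Q) (h : 𝒬.IsSeminormal) :
    IsTensorQCMon (freeTensorQC 𝒬) ∧
    ∀ l : List Q, (freeTensorQC 𝒬).wt (FreeMonoid.ofList l) = (l.map 𝒬.wt).sum := by
  refine ⟨⟨⟨?_, ?_, ?_, ?_, ?_, ?_, ?_, ?_⟩, ?_, ?_, ?_, ?_, ?_⟩, ?_⟩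
  · -- phi_eq
    intro i x
    exact freePhi_eq h i _
  · -- wt_e
    intro i x y hxy
    obtain ⟨l, hl, rfl⟩ := Option.map_eq_some_iff.mp hxy
    exact (freeE_step h i _ l hl).2.2.2.2.2
  · -- wt_f
    intro i x y hxy
    obtain ⟨l, hl, rfl⟩ := Option.map_eq_some_iff.mp hxy
    have h2 := freeF_step h i _ l hl
    have h3 := (freeE_step h i l _ h2).2.2.2.2.2
    show ((freeWt 𝒬 l : S.Λ) : V)
      = ((freeWt 𝒬 (FreeMonoid.toList x) : S.Λ) : V) - S.simple i
    rw [h3]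
    abel
  · -- e_iff_f
    intro i x y
    constructor
    · intro hxy
      obtain ⟨l, hl, rfl⟩ := Option.map_eq_some_iff.mp hxy
      have h2 := (freeE_step h i _ l hl).2.2.2.2.1
      show (freeF 𝒬 i (FreeMonoid.toList (FreeMonoid.ofList l))).map
        (fun l => FreeMonoid.ofList l) = some x
      rw [FreeMonoid.toList_ofList, h2]
      rfl
    · intro hyx
      obtain ⟨l, hl, hx⟩ := Option.map_eq_some_iff.mp hyx
      subst hx
      have h2 := freeF_step h i _ l hl
      show (freeE 𝒬 i (FreeMonoid.toList (FreeMonoid.ofList l))).map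
        (fun l => FreeMonoid.ofList l) = some y
      rw [FreeMonoid.toList_ofList, h2]
      rfl
  · -- e_of_top
    intro i x hx
    show (freeE 𝒬 i (FreeMonoid.toList x)).map (fun l => FreeMonoid.ofList l) = none
    rw [freeE_none_of_top h i _ hx]
    rfl
  · -- f_of_top
    intro i x hx
    show (freeF 𝒬 i (FreeMonoid.toList x)).map (fun l => FreeMonoid.ofList l) = none
    rw [freeF_none_of_top h i _ hx]
    rfl
  · -- eps_spec
    intro i x hx
    have hx' : freeEps 𝒬 i (FreeMonoid.toList x) ≠ ⊤ := hx
    obtain ⟨n, hn⟩ := wt_exists_coe hx'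
    have h0 : 0 ≤ n := by
      have h1 := freeEps_nonneg h i _ hx'
      rw [hn] at h1
      exact_mod_cast h1
    refine ⟨n.toNat, ?_, ?_⟩
    · show freeEps 𝒬 i (FreeMonoid.toList x) = _
      rw [hn]
      congr 1
      omega
    · apply isGreatest_optIter ((freeTensorQC 𝒬).e i) ((freeTensorQC 𝒬).ε i)
      · intro a b hab
        obtain ⟨l, hl, rfl⟩ := Option.map_eq_some_iff.mp hab
        exact (freeE_step h i _ l hl).2.2.1
      · intro a ha
        show (Option.map _ (freeE 𝒬 i (FreeMonoid.toList a))).isSome ↔ _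
        rw [Option.isSome_map]
        exact freeE_isSome_iff h i _ ha
      · show freeEps 𝒬 i (FreeMonoid.toList x) = _
        rw [hn]
        congr 1
        omega
  · -- phi_spec
    intro i x hx
    have hx' : freeEps 𝒬 i (FreeMonoid.toList x) ≠ ⊤ := hx
    have hp' : freePhi 𝒬 i (FreeMonoid.toList x) ≠ ⊤ := by
      rw [freePhi_eq h]
      exact wt_add_coe_ne_top _ hx'
    obtain ⟨n, hn⟩ := wt_exists_coe hp'
    have h0 : 0 ≤ n := by
      have h1 := freePhi_nonneg h i _ hx'
      rw [hn] at h1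
      exact_mod_cast h1
    refine ⟨n.toNat, ?_, ?_⟩
    · show freePhi 𝒬 i (FreeMonoid.toList x) = _
      rw [hn]
      congr 1
      omega
    · apply isGreatest_optIter ((freeTensorQC 𝒬).f i) ((freeTensorQC 𝒬).φ i)
      · intro a b hab
        obtain ⟨l, hl, rfl⟩ := Option.map_eq_some_iff.mp hab
        have h2 := freeF_step h i _ l hl
        exact ((freeE_step h i l _ h2).2.2.2.1).symm
      · intro a ha
        have ha' : freeEps 𝒬 i (FreeMonoid.toList a) ≠ ⊤ := by
          intro hc
          apply ha
          show freePhi 𝒬 i (FreeMonoid.toList a) = ⊤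
          rw [freePhi_eq h, hc, top_add]
        show (Option.map _ (freeF 𝒬 i (FreeMonoid.toList a))).isSome ↔ _
        rw [Option.isSome_map]
        exact freeF_isSome_iff h i _ ha'
      · show freePhi 𝒬 i (FreeMonoid.toList x) = _
        rw [hn]
        congr 1
        omega
  · -- wt_mul
    intro x y
    exact freeWt_append _ _
  · -- eps_mul
    intro i x y
    exact freeEps_append h i _ _
  · -- phi_mul
    intro i x y
    exact freePhi_append h i _ _
  · -- e_mul
    intro i x y
    show (freeE 𝒬 i (FreeMonoid.toList (x * y))).map (fun l => FreeMonoid.ofList l) = _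
    rw [FreeMonoid.toList_mul, freeE_append h i]
    by_cases hc : freeEps 𝒬 i (FreeMonoid.toList y) ≤ freePhi 𝒬 i (FreeMonoid.toList x)
    · rw [if_pos hc,
        if_pos (show (freeTensorQC 𝒬).ε i y ≤ (freeTensorQC 𝒬).φ i x from hc)]
      show _ = Option.map (fun t => t * y)
        ((freeE 𝒬 i (FreeMonoid.toList x)).map (fun l => FreeMonoid.ofList l))
      simp only [Option.map_map]
      rfl
    · rw [if_neg hc,
        if_neg (show ¬(freeTensorQC 𝒬).ε i y ≤ (freeTensorQC 𝒬).φ i x from hc)]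
      show _ = Option.map (fun t => x * t)
        ((freeE 𝒬 i (FreeMonoid.toList y)).map (fun l => FreeMonoid.ofList l))
      simp only [Option.map_map]
      rfl
  · -- f_mul
    intro i x y
    show (freeF 𝒬 i (FreeMonoid.toList (x * y))).map (fun l => FreeMonoid.ofList l) = _
    rw [FreeMonoid.toList_mul, freeF_append h i]
    by_cases hc : freeEps 𝒬 i (FreeMonoid.toList y) < freePhi 𝒬 i (FreeMonoid.toList x)
    · rw [if_pos hc,
        if_pos (show (freeTensorQC 𝒬).ε i y < (freeTensorQC 𝒬).φ i x from hc)]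
      show _ = Option.map (fun t => t * y)
        ((freeF 𝒬 i (FreeMonoid.toList x)).map (fun l => FreeMonoid.ofList l))
      simp only [Option.map_map]
      rfl
    · rw [if_neg hc,
        if_neg (show ¬(freeTensorQC 𝒬).ε i y < (freeTensorQC 𝒬).φ i x from hc)]
      show _ = Option.map (fun t => x * t)
        ((freeF 𝒬 i (FreeMonoid.toList y)).map (fun l => FreeMonoid.ofList l))
      simp only [Option.map_map]
      rfl
  · -- weight of a word is the sum of the weights of its letters
    intro l
    induction l with
    | nil => rfl
    | cons x w ih =>
      show 𝒬.wt x + freeWt 𝒬 w = _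
      rw [List.map_cons, List.sum_cons, ← ih]
      rfl
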